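/- The deformed vector fields X_{z,1} = −x·∂_y, X_{z,2} = (cosh(zx²) − shc(zx²)/2)·y·∂_y − (1/2)shc(zx²)·x·∂_x, and X_{z,3} = shc(zx²)·y·∂_x + [(c/x³)·cosh(zx²)/shc(zx²)² + (shc(zx²) − cosh(zx²))·y²/x]·∂_y satisfy [X_{z,1},X_{z,2}] = cosh(zx²)·X_{z,1}, [X_{z,1},X_{z,3}] = 2X_{z,2}, and [X_{z,2},X_{z,3}] = cosh(zx²)·X_{z,3} + z²(c + x²y²·shc(zx²)²)·X_{z,1} on ℝ²_{x≠0}. -/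

import Mathlib

noncomputable def shc (x : ℝ) : ℝ := if x = 0 then 1 else Real.sinh x / x

noncomputable def pdx (f : ℝ → ℝ → ℝ) (x y : ℝ) : ℝ := deriv (fun x' => f x' y) x

noncomputable def pdy (f : ℝ → ℝ → ℝ) (x y : ℝ) : ℝ := deriv (fun y' => f x y') y

/-- Lie bracket of planar vector fields X = (f,g), Y = (p,q). -/
noncomputable def lieBracket (f g p q : ℝ → ℝ → ℝ) (x y : ℝ) : ℝ × ℝ :=
  (f x y * pdx p x y + g x y * pdy p x y - (p x y * pdx f x y + q x y * pdy f x y),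
   f x y * pdx q x y + g x y * pdy q x y - (p x y * pdx g x y + q x y * pdy g x y))

lemma mul_shc (u : ℝ) : u * shc u = Real.sinh u := by
  unfold shc; split_ifs with h
  · simp [h]
  · field_simp

lemma shc_pos (u : ℝ) : 0 < shc u := by
  unfold shc; split_ifs with h
  · norm_num
  · rcases lt_or_gt_of_ne h with h' | h'
    · exact div_pos_of_neg_of_neg (by simpa using Real.sinh_neg_iff.2 h') h'
    · exact div_pos (Real.sinh_pos_iff.2 h') h'

lemma hasDerivAt_cosh_sq (z x : ℝ) :
    HasDerivAt (fun t => Real.cosh (z * t ^ 2)) (2 * z ^ 2 * x ^ 3 * shc (z * x ^ 2)) x := by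
  have h1 : HasDerivAt (fun t : ℝ => z * t ^ 2) (2 * z * x) x := by
    have := (hasDerivAt_pow 2 x).const_mul z
    exact this.congr_deriv (by norm_num; ring)
  have h2 := (Real.hasDerivAt_cosh (z * x ^ 2)).comp x h1
  exact h2.congr_deriv (by rw [← mul_shc (z * x ^ 2)]; ring)

lemma hasDerivAt_sinh_sq (z x : ℝ) :
    HasDerivAt (fun t => Real.sinh (z * t ^ 2)) (2 * z * x * Real.cosh (z * x ^ 2)) x := by
  have h1 : HasDerivAt (fun t : ℝ => z * t ^ 2) (2 * z * x) x := by
    have := (hasDerivAt_pow 2 x).const_mul z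
    exact this.congr_deriv (by norm_num; ring)
  have h2 := (Real.hasDerivAt_sinh (z * x ^ 2)).comp x h1
  exact h2.congr_deriv (by ring)

lemma hasDerivAt_shc_sq (z x : ℝ) (hx : x ≠ 0) :
    HasDerivAt (fun t => shc (z * t ^ 2))
      (2 * (Real.cosh (z * x ^ 2) - shc (z * x ^ 2)) / x) x := by
  rcases eq_or_ne z 0 with hz | hz
  · subst hz
    simp only [zero_mul, shc]
    simpa using (hasDerivAt_const x (1:ℝ))
  · have hu : z * x ^ 2 ≠ 0 := by positivity
    have h1 : HasDerivAt (fun t : ℝ => z * t ^ 2) (2 * z * x) x := by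
      have := (hasDerivAt_pow 2 x).const_mul z
      exact this.congr_deriv (by norm_num; ring)
    have h2 := (hasDerivAt_sinh_sq z x).div h1 hu
    have heq : (fun t => shc (z * t ^ 2)) =ᶠ[nhds x]
        (fun t => Real.sinh (z * t ^ 2) / (z * t ^ 2)) := by
      filter_upwards [isOpen_ne.mem_nhds hx] with t ht
      have : z * t ^ 2 ≠ 0 := by positivity
      simp [shc, this]
    refine HasDerivAt.congr_of_eventuallyEq ?_ heq
    refine h2.congr_deriv ?_
    have hsinh : Real.sinh (z * x ^ 2) = (z * x ^ 2) * shc (z * x ^ 2) := (mul_shc _).symm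
    rw [hsinh]
    field_simp

theorem deformed_mp_vf_brackets (z c : ℝ)
    (f₁ g₁ f₂ g₂ f₃ g₃ : ℝ → ℝ → ℝ)
    (H1 : ∀ x y : ℝ, f₁ x y = 0 ∧ g₁ x y = -x)
    (H2 : ∀ x y : ℝ,
      f₂ x y = -(1 / 2) * shc (z * x ^ 2) * x ∧
      g₂ x y = (Real.cosh (z * x ^ 2) - shc (z * x ^ 2) / 2) * y)
    (H3 : ∀ x y : ℝ,
      f₃ x y = shc (z * x ^ 2) * y ∧
      g₃ x y = (c / x ^ 3) * Real.cosh (z * x ^ 2) / (shc (z * x ^ 2)) ^ 2 +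
        (shc (z * x ^ 2) - Real.cosh (z * x ^ 2)) * y ^ 2 / x) :
    ∀ x y : ℝ, x ≠ 0 →
      lieBracket f₁ g₁ f₂ g₂ x y =
        (Real.cosh (z * x ^ 2) * f₁ x y, Real.cosh (z * x ^ 2) * g₁ x y) ∧
      lieBracket f₁ g₁ f₃ g₃ x y = (2 * f₂ x y, 2 * g₂ x y) ∧
      lieBracket f₂ g₂ f₃ g₃ x y =
        (Real.cosh (z * x ^ 2) * f₃ x y +
            z ^ 2 * (c + x ^ 2 * y ^ 2 * (shc (z * x ^ 2)) ^ 2) * f₁ x y,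
         Real.cosh (z * x ^ 2) * g₃ x y +
            z ^ 2 * (c + x ^ 2 * y ^ 2 * (shc (z * x ^ 2)) ^ 2) * g₁ x y) := by
  intro x y hx
  have hS0 : shc (z * x ^ 2) ≠ 0 := ne_of_gt (shc_pos _)
  have hkey : Real.cosh (z * x ^ 2) ^ 2 = 1 + (z * x ^ 2 * shc (z * x ^ 2)) ^ 2 := by
    rw [mul_shc]; exact Real.cosh_sq' _
  -- derivative lemmas specialized
  have hS' := hasDerivAt_shc_sq z x hx
  have hC' := hasDerivAt_cosh_sq z x
  -- functions of x'
  have F1x : (fun t => f₁ t y) = fun _ => (0:ℝ) := funext fun t => (H1 t y).1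
  have G1x : (fun t => g₁ t y) = fun t => -t := funext fun t => (H1 t y).2
  have F2x : (fun t => f₂ t y) = fun t => -(1/2) * shc (z * t ^ 2) * t :=
    funext fun t => (H2 t y).1
  have G2x : (fun t => g₂ t y) =
      fun t => (Real.cosh (z * t ^ 2) - shc (z * t ^ 2) / 2) * y :=
    funext fun t => (H2 t y).2
  have F3x : (fun t => f₃ t y) = fun t => shc (z * t ^ 2) * y := funext fun t => (H3 t y).1
  have G3x : (fun t => g₃ t y) =
      fun t => c * Real.cosh (z * t ^ 2) / (t ^ 3 * shc (z * t ^ 2) ^ 2) +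
        (shc (z * t ^ 2) - Real.cosh (z * t ^ 2)) * y ^ 2 / t := by
    funext t; rw [(H3 t y).2]; ring
  -- functions of y'
  have F1y : (fun u => f₁ x u) = fun _ => (0:ℝ) := funext fun u => (H1 x u).1
  have G1y : (fun u => g₁ x u) = fun _ => -x := funext fun u => (H1 x u).2
  have F2y : (fun u => f₂ x u) = fun _ => -(1/2) * shc (z * x ^ 2) * x :=
    funext fun u => (H2 x u).1
  have G2y : (fun u => g₂ x u) =
      fun u => (Real.cosh (z * x ^ 2) - shc (z * x ^ 2) / 2) * u :=
    funext fun u => (H2 x u).2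
  have F3y : (fun u => f₃ x u) = fun u => shc (z * x ^ 2) * u := funext fun u => (H3 x u).1
  have G3y : (fun u => g₃ x u) =
      fun u => (c / x ^ 3) * Real.cosh (z * x ^ 2) / (shc (z * x ^ 2)) ^ 2 +
        (shc (z * x ^ 2) - Real.cosh (z * x ^ 2)) * u ^ 2 / x :=
    funext fun u => (H3 x u).2
  -- HasDerivAt facts for x-direction
  have hg1x : HasDerivAt (fun t : ℝ => -t) (-1) x := by
    exact hasDerivAt_neg x
  have hf2x : HasDerivAt (fun t => -(1/2) * shc (z * t ^ 2) * t) _ x := ((hS'.const_mul (-(1/2))).mul (hasDerivAt_id' (𝕜 := ℝ) x))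
  have hg2x : HasDerivAt (fun t => (Real.cosh (z * t ^ 2) - shc (z * t ^ 2) / 2) * y) _ x :=
    ((hC'.sub (hS'.div_const 2)).mul_const y)
  have hf3x := hS'.mul_const y
  have hD0 : x ^ 3 * shc (z * x ^ 2) ^ 2 ≠ 0 := by positivity
  have hg3x : HasDerivAt (fun t => c * Real.cosh (z * t ^ 2) / (t ^ 3 * shc (z * t ^ 2) ^ 2) +
      (shc (z * t ^ 2) - Real.cosh (z * t ^ 2)) * y ^ 2 / t) _ x :=
    ((hC'.const_mul c).div ((hasDerivAt_pow 3 x).mul (hS'.pow 2)) hD0).add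
      (((hS'.sub hC').mul_const (y ^ 2)).div (hasDerivAt_id' (𝕜 := ℝ) x) hx)
  simp only [Pi.mul_apply, Pi.pow_apply, Pi.sub_apply] at hg3x
  -- HasDerivAt facts for y-direction
  have hg2y := (hasDerivAt_id' (𝕜 := ℝ) y).const_mul
    (Real.cosh (z * x ^ 2) - shc (z * x ^ 2) / 2)
  have hf3y := (hasDerivAt_id' (𝕜 := ℝ) y).const_mul (shc (z * x ^ 2))
  have hg3y := (((hasDerivAt_pow 2 y).const_mul
      (shc (z * x ^ 2) - Real.cosh (z * x ^ 2))).div_const x).const_add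
    ((c / x ^ 3) * Real.cosh (z * x ^ 2) / (shc (z * x ^ 2)) ^ 2)
  refine ⟨?_, ?_, ?_⟩
  · unfold lieBracket pdx pdy
    rw [F1x, G1x, F2x, G2x, F1y, G1y, F2y, G2y]
    rw [deriv_const, deriv_const, deriv_const, hg1x.deriv, hf2x.deriv, hg2x.deriv,
      hg2y.deriv]
    simp only [deriv_const']
    rw [(H1 x y).1, (H1 x y).2, (H2 x y).1, (H2 x y).2]
    refine Prod.ext ?_ ?_ <;> simp only []
    · ring
    · field_simp; ring
  · unfold lieBracket pdx pdy
    rw [F1x, G1x, F3x, G3x, F1y, G1y, F3y, G3y]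
    rw [deriv_const, deriv_const, hg1x.deriv, hf3x.deriv, hg3x.deriv, hf3y.deriv,
      hg3y.deriv]
    simp only [deriv_const']
    rw [(H1 x y).1, (H1 x y).2, (H3 x y).1, (H3 x y).2, (H2 x y).1, (H2 x y).2]
    refine Prod.ext ?_ ?_ <;> simp only []
    · field_simp; ring
    · field_simp; ring
  · unfold lieBracket pdx pdy
    rw [F2x, G2x, F3x, G3x, F2y, G2y, F3y, G3y]
    rw [deriv_const, hf2x.deriv, hg2x.deriv, hf3x.deriv, hg3x.deriv, hg2y.deriv,
      hf3y.deriv, hg3y.deriv]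
    rw [(H2 x y).1, (H2 x y).2, (H3 x y).1, (H3 x y).2, (H1 x y).1, (H1 x y).2]
    refine Prod.ext ?_ ?_ <;> simp only []
    · field_simp; ring
    · field_simp
      ring
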